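/- For every nonempty finite simple graph G, the ultimate categorical independence ratio A(G) = lim_{k→∞} i(G^{×k}) is a rational number. -/

import Mathlib

open scoped Classical
open Filter

/-- Categorical (tensor) product of two simple graphs. -/
def tensorProd {α β : Type*} (G : SimpleGraph α) (H : SimpleGraph β) :
    SimpleGraph (α × β) where
  Adj p q := G.Adj p.1 q.1 ∧ H.Adj p.2 q.2
  symm := ⟨fun p q h => ⟨h.1.symm, h.2.symm⟩⟩
  loopless := ⟨fun p h => G.irrefl h.1⟩

/-- A finset is independent. -/
def IsIndep {α : Type*} (G : SimpleGraph α) (U : Finset α) : Prop :=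
  ∀ u ∈ U, ∀ v ∈ U, ¬ G.Adj u v

/-- Neighborhood of a finset. -/
noncomputable def nbhd {α : Type*} [Fintype α] (G : SimpleGraph α) (U : Finset α) : Finset α :=
  Finset.univ.filter (fun v => ∃ u ∈ U, G.Adj u v)

/-- Independence number. -/
noncomputable def alphaNum {α : Type*} [Fintype α] (G : SimpleGraph α) : ℕ :=
  sSup {n : ℕ | ∃ U : Finset α, IsIndep G U ∧ U.card = n}

/-- Independence ratio. -/
noncomputable def iRatio {α : Type*} [Fintype α] (G : SimpleGraph α) : ℝ :=
  (alphaNum G : ℝ) / (Fintype.card α : ℝ)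

/-- a(G): the maximum of |U|/(|U|+|N(U)|) over nonempty independent sets. -/
noncomputable def aRatio {α : Type*} [Fintype α] (G : SimpleGraph α) : ℝ :=
  sSup {r : ℝ | ∃ U : Finset α, U.Nonempty ∧ IsIndep G U ∧
    r = (U.card : ℝ) / ((U.card : ℝ) + ((nbhd G U).card : ℝ))}

/-- b(G): the minimum of |N(U)|/|U| over nonempty independent sets. -/
noncomputable def bRatio {α : Type*} [Fintype α] (G : SimpleGraph α) : ℝ :=
  sInf {r : ℝ | ∃ U : Finset α, U.Nonempty ∧ IsIndep G U ∧
    r = ((nbhd G U).card : ℝ) / (U.card : ℝ)}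

/-- a*(G). -/
noncomputable def aStar {α : Type*} [Fintype α] (G : SimpleGraph α) : ℝ :=
  if aRatio G ≤ 1/2 then aRatio G else 1

/-- k-th categorical power of G. -/
def tensorPow {α : Type*} (G : SimpleGraph α) (k : ℕ) : SimpleGraph (Fin k → α) where
  Adj x y := x ≠ y ∧ ∀ i, G.Adj (x i) (y i)
  symm := ⟨fun x y h => ⟨h.1.symm, fun i => (h.2 i).symm⟩⟩
  loopless := ⟨fun x h => h.1 rfl⟩

/-- Disjoint union of two simple graphs. -/
def disjUnion {α β : Type*} (G : SimpleGraph α) (H : SimpleGraph β) :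
    SimpleGraph (α ⊕ β) where
  Adj p q := match p, q with
    | Sum.inl a, Sum.inl b => G.Adj a b
    | Sum.inr a, Sum.inr b => H.Adj a b
    | _, _ => False
  symm := ⟨by rintro (a|a) (b|b) h <;> simp_all <;> exact h.symm⟩
  loopless := ⟨by rintro (a|a) h <;> simp_all⟩
section Basic

lemma tensorProd_adj_iff {α β : Type*} {G : SimpleGraph α} {H : SimpleGraph β} {p q : α × β} :
    (tensorProd G H).Adj p q ↔ G.Adj p.1 q.1 ∧ H.Adj p.2 q.2 := Iff.rfl

lemma tensorPow_adj_iff {α : Type*} {G : SimpleGraph α} {k : ℕ} {x y : Fin k → α} :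
    (tensorPow G k).Adj x y ↔ x ≠ y ∧ ∀ i, G.Adj (x i) (y i) := Iff.rfl

variable {β : Type*} [Fintype β] {G : SimpleGraph β}

lemma mem_nbhd {U : Finset β} {v : β} : v ∈ nbhd G U ↔ ∃ u ∈ U, G.Adj u v := by
  simp [nbhd]

lemma nbhd_mono {U V : Finset β} (h : U ⊆ V) : nbhd G U ⊆ nbhd G V := by
  intro v hv
  rw [mem_nbhd] at *
  obtain ⟨u, hu, ha⟩ := hv
  exact ⟨u, h hu, ha⟩

lemma indep_disjoint_nbhd {U : Finset β} (hU : IsIndep G U) : Disjoint U (nbhd G U) := by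
  rw [Finset.disjoint_left]
  intro v hv hv'
  rw [mem_nbhd] at hv'
  obtain ⟨u, hu, ha⟩ := hv'
  exact hU u hu v hv ha

lemma alphaNum_bddAbove :
    BddAbove {n : ℕ | ∃ U : Finset β, IsIndep G U ∧ U.card = n} := by
  refine ⟨Fintype.card β, ?_⟩
  rintro n ⟨U, _, rfl⟩
  exact Finset.card_le_univ U

lemma card_le_alphaNum {U : Finset β} (h : IsIndep G U) : U.card ≤ alphaNum G :=
  le_csSup alphaNum_bddAbove ⟨U, h, rfl⟩

lemma exists_indep_card_alphaNum (G : SimpleGraph β) :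
    ∃ U : Finset β, IsIndep G U ∧ U.card = alphaNum G := by
  have hne : {n : ℕ | ∃ U : Finset β, IsIndep G U ∧ U.card = n}.Nonempty :=
    ⟨0, ∅, by intro u hu; simp at hu, Finset.card_empty⟩
  exact Nat.sSup_mem hne alphaNum_bddAbove

lemma alphaNum_le_card (G : SimpleGraph β) : alphaNum G ≤ Fintype.card β := by
  obtain ⟨U, _, hc⟩ := exists_indep_card_alphaNum G
  rw [← hc]; exact Finset.card_le_univ U

def aSet (G : SimpleGraph β) : Set ℝ :=
  {r : ℝ | ∃ U : Finset β, U.Nonempty ∧ IsIndep G U ∧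
    r = (U.card : ℝ) / ((U.card : ℝ) + ((nbhd G U).card : ℝ))}

lemma aSet_finite (G : SimpleGraph β) : (aSet G).Finite := by
  have : aSet G ⊆ (fun U : Finset β => (U.card : ℝ) / ((U.card : ℝ) + ((nbhd G U).card : ℝ))) ''
      Set.univ := by
    rintro r ⟨U, _, _, rfl⟩
    exact ⟨U, Set.mem_univ _, rfl⟩
  exact Set.Finite.subset (Set.Finite.image _ (Set.finite_univ)) this

lemma aSet_nonempty [Nonempty β] (G : SimpleGraph β) : (aSet G).Nonempty := by
  obtain ⟨v⟩ := (inferInstance : Nonempty β)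
  refine ⟨_, {v}, Finset.singleton_nonempty v, ?_, rfl⟩
  intro u hu w hw
  simp only [Finset.mem_singleton] at hu hw
  subst hu; subst hw; exact G.irrefl

lemma aRatio_mem [Nonempty β] (G : SimpleGraph β) : aRatio G ∈ aSet G :=
  Set.Nonempty.csSup_mem (aSet_nonempty G) (aSet_finite G)

lemma le_aRatio {U : Finset β} (hne : U.Nonempty) (hU : IsIndep G U) :
    (U.card : ℝ) / ((U.card : ℝ) + ((nbhd G U).card : ℝ)) ≤ aRatio G :=
  le_csSup (Set.Finite.bddAbove (aSet_finite G)) ⟨U, hne, hU, rfl⟩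

lemma aRatio_pos [Nonempty β] (G : SimpleGraph β) : 0 < aRatio G := by
  obtain ⟨U, hne, hU, hr⟩ := aRatio_mem G
  rw [hr]
  have h1 : (0:ℝ) < U.card := by exact_mod_cast Finset.card_pos.mpr hne
  positivity

end Basic
section Expansion
variable {β : Type*} [Fintype β]

/-- From expansion of independent sets, expansion-type bound for all sets. -/
lemma claim_expansion {G : SimpleGraph β} {c : ℝ}
    (hc : ∀ U : Finset β, IsIndep G U → c * U.card ≤ ((nbhd G U).card : ℝ))
    (A : Finset β) :
    c * ((A \ nbhd G A).card : ℝ) + ((A ∩ nbhd G A).card : ℝ) ≤ ((nbhd G A).card : ℝ) := by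
  classical
  set A₀ := A \ nbhd G A with hA₀
  have hindep : IsIndep G A₀ := by
    intro u hu v hv hadj
    rw [hA₀, Finset.mem_sdiff] at hu hv
    exact hv.2 (mem_nbhd.mpr ⟨u, hu.1, hadj⟩)
  have h1 : c * A₀.card ≤ ((nbhd G A₀).card : ℝ) := hc A₀ hindep
  have hsub : nbhd G A₀ ∪ (A ∩ nbhd G A) ⊆ nbhd G A := by
    intro x hx
    rcases Finset.mem_union.mp hx with hx | hx
    · exact nbhd_mono (Finset.sdiff_subset) hx
    · exact (Finset.mem_inter.mp hx).2
  have hdisj : Disjoint (nbhd G A₀) (A ∩ nbhd G A) := by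
    rw [Finset.disjoint_left]
    intro x hx hx'
    obtain ⟨u, hu, hadj⟩ := mem_nbhd.mp hx
    have hxA : x ∈ A := (Finset.mem_inter.mp hx').1
    have : u ∈ nbhd G A := mem_nbhd.mpr ⟨x, hxA, hadj.symm⟩
    rw [hA₀, Finset.mem_sdiff] at hu
    exact hu.2 this
  have hcard : (nbhd G A₀).card + (A ∩ nbhd G A).card ≤ (nbhd G A).card := by
    rw [← Finset.card_union_of_disjoint hdisj]
    exact Finset.card_le_card hsub
  have := (Nat.cast_le (α := ℝ)).mpr hcard
  push_cast at this
  linarith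

/-- Key lemma: c-expansion of independent sets is preserved under tensor products. -/
lemma tensorProd_expansion {β₁ β₂ : Type*} [Fintype β₁] [Fintype β₂]
    (G₁ : SimpleGraph β₁) (G₂ : SimpleGraph β₂) {c : ℝ} (hc1 : 1 ≤ c)
    (h₁ : ∀ U : Finset β₁, IsIndep G₁ U → c * U.card ≤ ((nbhd G₁ U).card : ℝ))
    (h₂ : ∀ U : Finset β₂, IsIndep G₂ U → c * U.card ≤ ((nbhd G₂ U).card : ℝ))
    (W : Finset (β₁ × β₂)) (hW : IsIndep (tensorProd G₁ G₂) W) :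
    c * W.card ≤ ((nbhd (tensorProd G₁ G₂) W).card : ℝ) := by
  classical
  set X : β₁ → Finset β₂ := fun v => Finset.univ.filter (fun h => (v, h) ∈ W) with hX
  set Y : β₁ → Finset β₂ := fun v => nbhd G₂ (X v) with hY
  set S : β₂ → Finset β₁ := fun h => Finset.univ.filter (fun v => h ∈ Y v) with hS
  set C : β₂ → Finset β₁ := fun h => Finset.univ.filter (fun v => h ∈ X v ∩ Y v) with hC
  have memX : ∀ v h, h ∈ X v ↔ (v, h) ∈ W := by
    intro v h; simp [hX]
  have cross : ∀ v v', G₁.Adj v v' → ∀ h ∈ X v, ∀ h' ∈ X v', ¬ G₂.Adj h h' := by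
    intro v v' hadj h hh h' hh' hadj2
    exact hW (v, h) ((memX v h).mp hh) (v', h') ((memX v' h').mp hh') (tensorProd_adj_iff.mpr ⟨hadj, hadj2⟩)
  -- |W| = ∑ v, |X v|
  have cardW : W.card = ∑ v, (X v).card := by
    rw [Finset.card_eq_sum_card_fiberwise (f := fun p : β₁ × β₂ => p.1)
      (t := Finset.univ) (fun x _ => Finset.mem_univ _)]
    refine Finset.sum_congr rfl (fun v _ => ?_)
    refine Finset.card_bij (fun p _ => p.2) ?_ ?_ ?_
    · rintro ⟨a, b⟩ hp
      simp only [Finset.mem_filter] at hp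
      obtain ⟨h1, h2⟩ := hp
      rw [memX]
      subst h2
      exact h1
    · intro p hp q hq hpq
      simp only [Finset.mem_filter] at hp hq
      exact Prod.ext (hp.2.trans hq.2.symm) hpq
    · intro h hh
      exact ⟨(v, h), Finset.mem_filter.mpr ⟨(memX v h).mp hh, rfl⟩, rfl⟩
  -- |N(W)| = ∑ h, |nbhd G₁ (S h)|
  set N := nbhd (tensorProd G₁ G₂) W with hN
  have fibN : ∀ h : β₂, Finset.univ.filter (fun v' => (v', h) ∈ N) = nbhd G₁ (S h) := by
    intro h
    ext v'
    rw [Finset.mem_filter, mem_nbhd]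
    simp only [Finset.mem_univ, true_and, hN]
    rw [mem_nbhd]
    simp only [tensorProd_adj_iff]
    constructor
    · rintro ⟨⟨v₀, h₀⟩, hmem, hadj1, hadj2⟩
      refine ⟨v₀, ?_, hadj1⟩
      refine Finset.mem_filter.mpr ⟨Finset.mem_univ _, ?_⟩
      exact mem_nbhd.mpr ⟨h₀, (memX v₀ h₀).mpr hmem, hadj2⟩
    · rintro ⟨v₀, hv₀, hadj1⟩
      obtain ⟨-, hy⟩ := Finset.mem_filter.mp hv₀
      obtain ⟨h₀, hh₀, hadj2⟩ := mem_nbhd.mp hy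
      exact ⟨(v₀, h₀), (memX v₀ h₀).mp hh₀, hadj1, hadj2⟩
  have cardN : N.card = ∑ h, (nbhd G₁ (S h)).card := by
    rw [Finset.card_eq_sum_card_fiberwise (f := fun p : β₁ × β₂ => p.2)
      (t := Finset.univ) (fun x _ => Finset.mem_univ _)]
    refine Finset.sum_congr rfl (fun h _ => ?_)
    rw [← fibN h]
    refine Finset.card_bij (fun p _ => p.1) ?_ ?_ ?_
    · intro p hp
      simp only [Finset.mem_filter] at hp ⊢
      refine ⟨Finset.mem_univ _, ?_⟩
      rw [show ((p.1 : β₁), h) = p from Prod.ext rfl hp.2.symm]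
      exact hp.1
    · intro p hp q hq hpq
      simp only [Finset.mem_filter] at hp hq
      exact Prod.ext hpq (hp.2.trans hq.2.symm)
    · intro v hv
      simp only [Finset.mem_filter, Finset.mem_univ, true_and] at hv
      exact ⟨(v, h), Finset.mem_filter.mpr ⟨hv, rfl⟩, rfl⟩
  -- double counting
  have sumS : ∑ h, ((S h).card : ℝ) = ∑ v, ((Y v).card : ℝ) := by
    have : ∀ h, ((S h).card : ℝ) = ∑ v, (if h ∈ Y v then (1:ℝ) else 0) := by
      intro h
      rw [hS]
      rw [Finset.card_filter]
      push_cast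
      rfl
    simp only [this]
    rw [Finset.sum_comm]
    refine Finset.sum_congr rfl (fun v _ => ?_)
    rw [Finset.sum_ite_mem]
    simp
  have sumC : ∑ h, ((C h).card : ℝ) = ∑ v, (((X v ∩ Y v).card : ℝ)) := by
    have : ∀ h, ((C h).card : ℝ) = ∑ v, (if h ∈ X v ∩ Y v then (1:ℝ) else 0) := by
      intro h
      rw [hC]
      rw [Finset.card_filter]
      push_cast
      rfl
    simp only [this]
    rw [Finset.sum_comm]
    refine Finset.sum_congr rfl (fun v _ => ?_)
    rw [Finset.sum_ite_mem]
    simp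
  -- C h ⊆ S h \ nbhd G₁ (S h)
  have hCsub : ∀ h, C h ⊆ S h \ nbhd G₁ (S h) := by
    intro h v hv
    simp only [hC, Finset.mem_filter, Finset.mem_univ, true_and, Finset.mem_inter] at hv
    rw [Finset.mem_sdiff]
    constructor
    · rw [hS]; exact Finset.mem_filter.mpr ⟨Finset.mem_univ _, hv.2⟩
    · intro hmem
      obtain ⟨v', hv', hadj⟩ := mem_nbhd.mp hmem
      rw [hS, Finset.mem_filter] at hv'
      obtain ⟨h', hh', hadj2⟩ := mem_nbhd.mp hv'.2
      exact cross v' v hadj h' hh' h hv.1 hadj2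
  -- per-h bound
  have perh : ∀ h, ((S h).card : ℝ) + (c - 1) * (C h).card ≤ ((nbhd G₁ (S h)).card : ℝ) := by
    intro h
    have hcl := claim_expansion h₁ (S h)
    have hsplit : ((S h \ nbhd G₁ (S h)).card : ℝ) + ((S h ∩ nbhd G₁ (S h)).card : ℝ)
        = ((S h).card : ℝ) := by
      rw [← Nat.cast_add, Finset.card_sdiff_add_card_inter]
    have hCle : ((C h).card : ℝ) ≤ ((S h \ nbhd G₁ (S h)).card : ℝ) := by
      exact_mod_cast Finset.card_le_card (hCsub h)
    nlinarith [hcl, hsplit, hCle]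
  -- per-v bound
  have perv : ∀ v, c * ((X v).card : ℝ) ≤ ((Y v).card : ℝ) + (c - 1) * ((X v ∩ Y v).card : ℝ) := by
    intro v
    have hcl := claim_expansion h₂ (X v)
    have hsplit : ((X v \ Y v).card : ℝ) + ((X v ∩ Y v).card : ℝ) = ((X v).card : ℝ) := by
      rw [← Nat.cast_add, Finset.card_sdiff_add_card_inter]
    rw [hY]
    nlinarith [hcl, hsplit]
  -- assemble
  have step1 : ∑ h, (((S h).card : ℝ) + (c - 1) * (C h).card) ≤ (N.card : ℝ) := by
    rw [cardN]
    push_cast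
    exact Finset.sum_le_sum (fun h _ => perh h)
  have step2 : c * (W.card : ℝ) ≤ ∑ h, (((S h).card : ℝ) + (c - 1) * (C h).card) := by
    have e1 : c * (W.card : ℝ) = ∑ v, (c * ((X v).card : ℝ)) := by
      rw [cardW]
      push_cast
      rw [Finset.mul_sum]
    have e2 : ∑ v, (((Y v).card : ℝ) + (c - 1) * ((X v ∩ Y v).card : ℝ))
        = ∑ h, (((S h).card : ℝ) + (c - 1) * (C h).card) := by
      rw [Finset.sum_add_distrib, Finset.sum_add_distrib, ← Finset.mul_sum, ← Finset.mul_sum,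
        sumS, sumC]
    calc c * (W.card : ℝ) = ∑ v, (c * ((X v).card : ℝ)) := e1
      _ ≤ ∑ v, (((Y v).card : ℝ) + (c - 1) * ((X v ∩ Y v).card : ℝ)) :=
          Finset.sum_le_sum (fun v _ => perv v)
      _ = _ := e2
  linarith

end Expansion
section Transfer
variable {β₁ β₂ : Type*} [Fintype β₁] [Fintype β₂]

lemma indep_image {F₁ : SimpleGraph β₁} {F₂ : SimpleGraph β₂} (e : β₁ ≃ β₂)
    (he : ∀ a b, F₁.Adj a b ↔ F₂.Adj (e a) (e b)) {W : Finset β₁} (hW : IsIndep F₁ W) :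
    IsIndep F₂ (W.image e) := by
  intro u hu v hv hadj
  obtain ⟨a, ha, rfl⟩ := Finset.mem_image.mp hu
  obtain ⟨b, hb, rfl⟩ := Finset.mem_image.mp hv
  exact hW a ha b hb ((he a b).mpr hadj)

lemma nbhd_image {F₁ : SimpleGraph β₁} {F₂ : SimpleGraph β₂} (e : β₁ ≃ β₂)
    (he : ∀ a b, F₁.Adj a b ↔ F₂.Adj (e a) (e b)) (W : Finset β₁) :
    nbhd F₂ (W.image e) = (nbhd F₁ W).image e := by
  ext y
  rw [mem_nbhd, Finset.mem_image]
  constructor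
  · rintro ⟨u, hu, hadj⟩
    obtain ⟨a, ha, rfl⟩ := Finset.mem_image.mp hu
    refine ⟨e.symm y, mem_nbhd.mpr ⟨a, ha, ?_⟩, e.apply_symm_apply y⟩
    rw [he]
    rwa [e.apply_symm_apply]
  · rintro ⟨x, hx, rfl⟩
    obtain ⟨a, ha, hadj⟩ := mem_nbhd.mp hx
    exact ⟨e a, Finset.mem_image_of_mem e ha, (he a x).mp hadj⟩

lemma expansion_transfer {F₁ : SimpleGraph β₁} {F₂ : SimpleGraph β₂} (e : β₁ ≃ β₂)
    (he : ∀ a b, F₁.Adj a b ↔ F₂.Adj (e a) (e b)) {c : ℝ}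
    (h : ∀ W : Finset β₁, IsIndep F₁ W → c * W.card ≤ ((nbhd F₁ W).card : ℝ)) :
    ∀ W : Finset β₂, IsIndep F₂ W → c * W.card ≤ ((nbhd F₂ W).card : ℝ) := by
  intro W hW
  have he' : ∀ a b, F₂.Adj a b ↔ F₁.Adj (e.symm a) (e.symm b) := by
    intro a b
    rw [he (e.symm a) (e.symm b), e.apply_symm_apply, e.apply_symm_apply]
  have hW' : IsIndep F₁ (W.image e.symm) := indep_image e.symm he' hW
  have hcard : (W.image e.symm).card = W.card :=
    Finset.card_image_of_injective W e.symm.injective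
  have hnb : nbhd F₁ (W.image e.symm) = (nbhd F₂ W).image e.symm := nbhd_image e.symm he' W
  have := h (W.image e.symm) hW'
  rw [hcard, hnb, Finset.card_image_of_injective _ e.symm.injective] at this
  exact this

lemma indep_image_card {F₁ : SimpleGraph β₁} {F₂ : SimpleGraph β₂} (e : β₁ ≃ β₂)
    (he : ∀ a b, F₁.Adj a b ↔ F₂.Adj (e a) (e b)) {W : Finset β₁} (hW : IsIndep F₁ W) :
    ∃ W' : Finset β₂, IsIndep F₂ W' ∧ W'.card = W.card :=
  ⟨W.image e, indep_image e he hW, Finset.card_image_of_injective _ e.injective⟩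

end Transfer

section PowIso
variable {α : Type*}

/-- Splitting equivalence for functions on `Fin (m+1)`. -/
def splitEquiv (m : ℕ) : (Fin (m + 1) → α) ≃ α × (Fin m → α) where
  toFun x := (x 0, fun i => x i.succ)
  invFun p := Fin.cons p.1 p.2
  left_inv x := by
    ext i
    refine Fin.cases ?_ ?_ i
    · simp
    · intro j
      simp
  right_inv p := by
    ext <;> simp

lemma adj_pow_one (G : SimpleGraph α) (x y : Fin 1 → α) :
    (tensorPow G 1).Adj x y ↔ G.Adj (x 0) (y 0) := by
  rw [tensorPow_adj_iff]
  constructor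
  · exact fun h => h.2 0
  · intro h
    refine ⟨?_, ?_⟩
    · intro hxy
      subst hxy
      exact G.irrefl h
    · intro i
      have : i = 0 := Subsingleton.elim i 0
      rw [this]
      exact h

lemma adj_pow_succ (G : SimpleGraph α) (k : ℕ) (x y : Fin (k + 2) → α) :
    (tensorPow G (k + 2)).Adj x y ↔
      (tensorProd G (tensorPow G (k + 1))).Adj (splitEquiv (k + 1) x) (splitEquiv (k + 1) y) := by
  simp only [tensorPow_adj_iff, tensorProd_adj_iff]
  constructor
  · rintro ⟨hne, hall⟩
    refine ⟨hall 0, ?_, fun i => hall i.succ⟩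
    intro htl
    have h1 := hall (Fin.succ 0)
    have h2 : x (Fin.succ 0) = y (Fin.succ 0) := congrFun htl 0
    rw [h2] at h1
    exact G.irrefl h1
  · rintro ⟨hhead, htne, htadj⟩
    refine ⟨?_, ?_⟩
    · intro hxy
      subst hxy
      exact G.irrefl hhead
    · intro i
      refine Fin.cases ?_ ?_ i
      · exact hhead
      · exact htadj

end PowIso
section Upper
variable {α : Type*} [Fintype α] [Nonempty α] (G : SimpleGraph α)

lemma pow_expansion {c : ℝ} (hc1 : 1 ≤ c)
    (hG : ∀ U : Finset α, IsIndep G U → c * U.card ≤ ((nbhd G U).card : ℝ)) (k : ℕ) :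
    ∀ W : Finset (Fin (k + 1) → α), IsIndep (tensorPow G (k + 1)) W →
      c * W.card ≤ ((nbhd (tensorPow G (k + 1)) W).card : ℝ) := by
  induction k with
  | zero =>
      refine expansion_transfer (Equiv.funUnique (Fin 1) α).symm ?_ hG
      intro a b
      rw [adj_pow_one]
      simp [Equiv.funUnique]
  | succ k ih =>
      refine expansion_transfer (splitEquiv (k + 1)).symm ?_
        (fun W hW => tensorProd_expansion G (tensorPow G (k + 1)) hc1 hG ih W hW)
      intro a b
      rw [adj_pow_succ, Equiv.apply_symm_apply, Equiv.apply_symm_apply]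

lemma iRatio_le_aRatio_of_le_half (hhalf : aRatio G ≤ 1 / 2) (k : ℕ) :
    iRatio (tensorPow G (k + 1)) ≤ aRatio G := by
  have ha0 : 0 < aRatio G := aRatio_pos G
  set a := aRatio G with haa
  set c : ℝ := (1 - a) / a with hcc
  have hc1 : 1 ≤ c := by
    rw [hcc, le_div_iff₀ ha0]
    linarith
  have hG : ∀ U : Finset α, IsIndep G U → c * U.card ≤ ((nbhd G U).card : ℝ) := by
    intro U hU
    rcases U.eq_empty_or_nonempty with rfl | hne
    · simp
    · have hle := le_aRatio hne hU
      have hU0 : (0:ℝ) < U.card := by exact_mod_cast Finset.card_pos.mpr hne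
      have hden : (0:ℝ) < (U.card : ℝ) + ((nbhd G U).card : ℝ) := by positivity
      rw [div_le_iff₀ hden] at hle
      rw [hcc, div_mul_eq_mul_div, div_le_iff₀ ha0]
      nlinarith
  obtain ⟨W, hWind, hWcard⟩ := exists_indep_card_alphaNum (tensorPow G (k + 1))
  have hexp := pow_expansion G hc1 hG k W hWind
  have hdisj : Disjoint W (nbhd (tensorPow G (k + 1)) W) := indep_disjoint_nbhd hWind
  have hle : W.card + (nbhd (tensorPow G (k + 1)) W).card ≤ Fintype.card (Fin (k + 1) → α) := by
    rw [← Finset.card_union_of_disjoint hdisj]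
    exact Finset.card_le_univ _
  have hcast : (W.card : ℝ) + ((nbhd (tensorPow G (k + 1)) W).card : ℝ)
      ≤ (Fintype.card (Fin (k + 1) → α) : ℝ) := by exact_mod_cast hle
  have hNpos : (0:ℝ) < (Fintype.card (Fin (k + 1) → α) : ℝ) := by
    have := Fintype.card_pos (α := Fin (k + 1) → α)
    exact_mod_cast this
  have key : (1 + c) * (W.card : ℝ) ≤ (Fintype.card (Fin (k + 1) → α) : ℝ) := by
    nlinarith
  have h1c : (1 + c) = 1 / a := by
    rw [hcc]
    field_simp
    ring
  rw [iRatio, div_le_iff₀ hNpos, ← hWcard]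
  rw [h1c, div_mul_eq_mul_div, div_le_iff₀ ha0] at key
  nlinarith [key]

end Upper
section Lower1
variable {α : Type*} [Fintype α] [Nonempty α] (G : SimpleGraph α)

lemma iRatio_nonneg {β : Type*} [Fintype β] (H : SimpleGraph β) : 0 ≤ iRatio H := by
  rw [iRatio]
  positivity

lemma card_fun_succ (k : ℕ) :
    Fintype.card (Fin (k + 2) → α) = Fintype.card α * Fintype.card (Fin (k + 1) → α) := by
  simp only [Fintype.card_fun, Fintype.card_fin]
  ring

lemma alphaNum_recursion {U₀ : Finset α} (hU₀ : IsIndep G U₀) (k : ℕ) :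
    U₀.card * Fintype.card (Fin (k + 1) → α)
      + (Fintype.card α - (U₀.card + (nbhd G U₀).card)) * alphaNum (tensorPow G (k + 1))
      ≤ alphaNum (tensorPow G (k + 2)) := by
  classical
  obtain ⟨T, hT, hTcard⟩ := exists_indep_card_alphaNum (tensorPow G (k + 1))
  set M : Finset α := U₀ ∪ nbhd G U₀ with hM
  set S' : Finset (α × (Fin (k + 1) → α)) := (U₀ ×ˢ Finset.univ) ∪ (Mᶜ ×ˢ T) with hS'
  have hSind : IsIndep (tensorProd G (tensorPow G (k + 1))) S' := by
    intro p hp q hq hadj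
    obtain ⟨hadj1, hadj2⟩ := tensorProd_adj_iff.mp hadj
    rw [hS', Finset.mem_union, Finset.mem_product, Finset.mem_product] at hp hq
    rcases hp with ⟨hp1, -⟩ | ⟨hp1, hp2⟩ <;> rcases hq with ⟨hq1, -⟩ | ⟨hq1, hq2⟩
    · exact hU₀ _ hp1 _ hq1 hadj1
    · rw [Finset.mem_compl] at hq1
      exact hq1 (Finset.mem_union_right _ (mem_nbhd.mpr ⟨p.1, hp1, hadj1⟩))
    · rw [Finset.mem_compl] at hp1
      exact hp1 (Finset.mem_union_right _ (mem_nbhd.mpr ⟨q.1, hq1, hadj1.symm⟩))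
    · exact hT _ hp2 _ hq2 hadj2
  have hdisj : Disjoint (U₀ ×ˢ (Finset.univ : Finset (Fin (k + 1) → α))) (Mᶜ ×ˢ T) := by
    rw [Finset.disjoint_left]
    rintro p hp hq
    rw [Finset.mem_product] at hp hq
    exact (Finset.mem_compl.mp hq.1) (Finset.mem_union_left _ hp.1)
  have hcard : S'.card = U₀.card * Fintype.card (Fin (k + 1) → α)
      + (Fintype.card α - (U₀.card + (nbhd G U₀).card)) * alphaNum (tensorPow G (k + 1)) := by
    rw [hS', Finset.card_union_of_disjoint hdisj, Finset.card_product, Finset.card_product,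
      Finset.card_univ, Finset.card_compl, hTcard, hM,
      Finset.card_union_of_disjoint (indep_disjoint_nbhd hU₀)]
  have he : ∀ a b, (tensorProd G (tensorPow G (k + 1))).Adj a b ↔
      (tensorPow G (k + 2)).Adj ((splitEquiv (k + 1)).symm a) ((splitEquiv (k + 1)).symm b) := by
    intro a b
    rw [adj_pow_succ, Equiv.apply_symm_apply, Equiv.apply_symm_apply]
  obtain ⟨W', hW', hcW⟩ := indep_image_card (splitEquiv (k + 1)).symm he hSind
  have hfin := card_le_alphaNum hW'
  rw [hcW, hcard] at hfin
  exact hfin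

lemma iRatio_lower_rec {U₀ : Finset α} (hne : U₀.Nonempty) (hU₀ : IsIndep G U₀) (k : ℕ) :
    ((U₀.card : ℝ) / ((U₀.card : ℝ) + ((nbhd G U₀).card : ℝ)))
        * (1 - (((Fintype.card α - (U₀.card + (nbhd G U₀).card) : ℕ) : ℝ)
            / (Fintype.card α : ℝ)) ^ k)
      ≤ iRatio (tensorPow G (k + 1)) := by
  classical
  set u : ℕ := U₀.card with hu
  set w : ℕ := (nbhd G U₀).card with hw
  have hmn : u + w ≤ Fintype.card α := by
    rw [hu, hw, ← Finset.card_union_of_disjoint (indep_disjoint_nbhd hU₀)]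
    exact Finset.card_le_univ _
  have hupos : 0 < u := Finset.card_pos.mpr hne
  have hnpos : (0 : ℝ) < (Fintype.card α : ℝ) := by
    exact_mod_cast Fintype.card_pos
  have hmpos : (0 : ℝ) < (u : ℝ) + (w : ℝ) := by
    have : (0:ℝ) < (u:ℝ) := by exact_mod_cast hupos
    have hw0 : (0:ℝ) ≤ (w:ℝ) := by positivity
    linarith
  have hsub : ((Fintype.card α - (u + w) : ℕ) : ℝ) = (Fintype.card α : ℝ) - ((u : ℝ) + (w : ℝ)) := by
    push_cast [Nat.cast_sub hmn]
    ring
  induction k with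
  | zero =>
      simp only [pow_zero, sub_self, mul_zero]
      exact iRatio_nonneg _
  | succ k ih =>
      set a : ℝ := (u : ℝ) / ((u : ℝ) + (w : ℝ)) with ha
      set r : ℝ := ((Fintype.card α - (u + w) : ℕ) : ℝ) / (Fintype.card α : ℝ) with hr
      have hrec := alphaNum_recursion G hU₀ k
      have hrecR : (u : ℝ) * (Fintype.card (Fin (k + 1) → α) : ℝ)
          + ((Fintype.card α - (u + w) : ℕ) : ℝ) * (alphaNum (tensorPow G (k + 1)) : ℝ)
          ≤ (alphaNum (tensorPow G (k + 2)) : ℝ) := by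
        exact_mod_cast hrec
      have hNk : (0 : ℝ) < (Fintype.card (Fin (k + 1) → α) : ℝ) := by
        exact_mod_cast Fintype.card_pos
      have hcard2 : (Fintype.card (Fin (k + 2) → α) : ℝ)
          = (Fintype.card α : ℝ) * (Fintype.card (Fin (k + 1) → α) : ℝ) := by
        exact_mod_cast card_fun_succ (α := α) k
      have hihα : a * (1 - r ^ k) * (Fintype.card (Fin (k + 1) → α) : ℝ)
          ≤ (alphaNum (tensorPow G (k + 1)) : ℝ) := by
        have := ih
        rw [iRatio, le_div_iff₀ hNk] at this
        exact this
      have hrnn : 0 ≤ r := by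
        rw [hr]
        positivity
      -- key identity
      have hkey : (u : ℝ) + ((Fintype.card α : ℝ) - ((u:ℝ) + (w:ℝ))) * (a * (1 - r ^ k))
          = a * (1 - r ^ (k + 1)) * (Fintype.card α : ℝ) := by
        have hrr : r * (Fintype.card α : ℝ) = (Fintype.card α : ℝ) - ((u:ℝ) + (w:ℝ)) := by
          rw [hr, hsub, div_mul_cancel₀ _ (ne_of_gt hnpos)]
        have haa' : a * ((u:ℝ) + (w:ℝ)) = (u:ℝ) := by
          rw [ha, div_mul_cancel₀ _ (ne_of_gt hmpos)]
        rw [← hrr, pow_succ]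
        linear_combination a * hrr - haa'
      rw [iRatio, le_div_iff₀ (by exact_mod_cast Fintype.card_pos :
        (0:ℝ) < (Fintype.card (Fin (k + 2) → α) : ℝ)), hcard2]
      rw [hsub] at hrecR
      have hnm : (0:ℝ) ≤ ((Fintype.card α : ℝ) - ((u:ℝ) + (w:ℝ))) := by
        rw [← hsub]
        positivity
      have h2 := mul_le_mul_of_nonneg_left hihα hnm
      nlinarith [hrecR, h2, hkey, hNk]

end Lower1
section Lower2
variable {α : Type*} [Fintype α] [Nonempty α] (G : SimpleGraph α)

set_option maxHeartbeats 1000000 in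
lemma iRatio_lower_maj {U₀ : Finset α} (hU₀ : IsIndep G U₀)
    (hgt : (nbhd G U₀).card < U₀.card) :
    ∃ q : ℝ, 0 ≤ q ∧ q < 1 ∧ ∀ k : ℕ, 1 - q ^ (k + 1) ≤ iRatio (tensorPow G (k + 1)) := by
  classical
  set u : ℕ := U₀.card with hu
  set w : ℕ := (nbhd G U₀).card with hw
  set n : ℕ := Fintype.card α with hn
  have hupos : 0 < u := lt_of_le_of_lt (Nat.zero_le _) hgt
  have hmn : u + w ≤ n := by
    rw [hu, hw, ← Finset.card_union_of_disjoint (indep_disjoint_nbhd hU₀), hn]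
    exact Finset.card_le_univ _
  have hnpos : (0:ℝ) < (n:ℝ) := by
    have : 0 < n := lt_of_lt_of_le (by omega) hmn
    exact_mod_cast this
  have huR : (0:ℝ) < (u:ℝ) := by exact_mod_cast hupos
  have hwR : (0:ℝ) ≤ (w:ℝ) := by positivity
  have hgtR : (w:ℝ) < (u:ℝ) := by exact_mod_cast hgt
  set lam : ℝ := if w = 0 then 2 else ((u:ℝ) + (w:ℝ)) / (2 * (w:ℝ)) with hlam
  have hlam1 : 1 < lam := by
    rw [hlam]
    split_ifs with h0
    · norm_num
    · have hw0 : (0:ℝ) < (w:ℝ) := by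
        have : 0 < w := Nat.pos_of_ne_zero h0
        exact_mod_cast this
      rw [lt_div_iff₀ (by linarith)]
      linarith
  have hlampos : (0:ℝ) < lam := by linarith
  have hwl : (w:ℝ) * lam < (u:ℝ) := by
    rw [hlam]
    split_ifs with h0
    · simp only [h0, Nat.cast_zero, zero_mul]
      exact huR
    · have hw0 : (0:ℝ) < (w:ℝ) := by
        have : 0 < w := Nat.pos_of_ne_zero h0
        exact_mod_cast this
      have heq : (w:ℝ) * (((u:ℝ) + (w:ℝ)) / (2 * (w:ℝ))) = ((u:ℝ) + (w:ℝ)) / 2 := by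
        field_simp [hw0.ne']
      rw [heq]
      linarith
  have hkeylam : (u:ℝ) * lam⁻¹ + (w:ℝ) * lam < (u:ℝ) + (w:ℝ) := by
    have hinvpos : (0:ℝ) < lam⁻¹ := inv_pos.mpr hlampos
    have h1 : lam⁻¹ * lam = 1 := inv_mul_cancel₀ (ne_of_gt hlampos)
    have h2 : lam⁻¹ * (lam * lam) = lam := by
      rw [← mul_assoc, h1, one_mul]
    have hfact : (u:ℝ) * lam⁻¹ + (w:ℝ) * lam - (u:ℝ) - (w:ℝ)
        = lam⁻¹ * (((w:ℝ) * lam - (u:ℝ)) * (lam - 1)) := by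
      linear_combination (-(w:ℝ)) * h2 + ((u:ℝ) + (w:ℝ)) * h1
    have hneg : lam⁻¹ * (((w:ℝ) * lam - (u:ℝ)) * (lam - 1)) < 0 := by
      apply mul_neg_of_pos_of_neg hinvpos
      apply mul_neg_of_neg_of_pos
      · linarith
      · linarith
    linarith
  set sigma : ℝ := ((n:ℝ) - ((u:ℝ) + (w:ℝ))) + (u:ℝ) * lam⁻¹ + (w:ℝ) * lam with hsigma
  have hnuw : ((u:ℝ) + (w:ℝ)) ≤ (n:ℝ) := by
    have : ((u + w : ℕ):ℝ) ≤ (n:ℝ) := by exact_mod_cast hmn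
    push_cast at this
    linarith
  have hsig0 : 0 ≤ sigma := by
    have h2 : (0:ℝ) ≤ (u:ℝ) * lam⁻¹ := mul_nonneg huR.le (inv_nonneg.mpr hlampos.le)
    have h3 : (0:ℝ) ≤ (w:ℝ) * lam := mul_nonneg hwR hlampos.le
    rw [hsigma]
    linarith
  have hsign : sigma < (n:ℝ) := by
    rw [hsigma]
    linarith
  refine ⟨sigma / (n:ℝ), div_nonneg hsig0 hnpos.le, by rw [div_lt_one hnpos]; exact hsign, ?_⟩
  intro k
  set t := k + 1 with ht
  set cU : (Fin t → α) → ℕ := fun x => (Finset.univ.filter (fun i => x i ∈ U₀)).card with hcU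
  set cW : (Fin t → α) → ℕ :=
    fun x => (Finset.univ.filter (fun i => x i ∈ nbhd G U₀)).card with hcW
  set M : Finset (Fin t → α) := Finset.univ.filter (fun x => cW x < cU x) with hM
  set Bad : Finset (Fin t → α) := Finset.univ.filter (fun x => ¬ (cW x < cU x)) with hBad
  have hkeyadj : ∀ x y : Fin t → α, (∀ i, G.Adj (x i) (y i)) → cU x ≤ cW y := by
    intro x y hadj
    rw [hcU, hcW]
    apply Finset.card_le_card
    intro i hi
    rw [Finset.mem_filter] at hi ⊢
    exact ⟨Finset.mem_univ _, mem_nbhd.mpr ⟨x i, hi.2, hadj i⟩⟩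
  have hMind : IsIndep (tensorPow G t) M := by
    intro x hx y hy hadj
    rw [hM, Finset.mem_filter] at hx hy
    have h1 := hkeyadj x y (tensorPow_adj_iff.mp hadj).2
    have h2 := hkeyadj y x (fun i => ((tensorPow_adj_iff.mp hadj).2 i).symm)
    omega
  set om : α → ℝ := fun v => if v ∈ U₀ then lam⁻¹ else if v ∈ nbhd G U₀ then lam else 1 with hom
  have hom0 : ∀ v, 0 ≤ om v := by
    intro v
    simp only [hom]
    split_ifs
    · exact inv_nonneg.mpr hlampos.le
    · exact hlampos.le
    · norm_num
  have hdisjUW : ∀ v, v ∈ nbhd G U₀ → v ∉ U₀ := by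
    intro v hv hv'
    exact (Finset.disjoint_left.mp (indep_disjoint_nbhd hU₀)) hv' hv
  have prodform : ∀ x : Fin t → α, ∏ i, om (x i) = lam ^ (cW x) * (lam⁻¹) ^ (cU x) := by
    intro x
    rw [← Finset.prod_filter_mul_prod_filter_not Finset.univ (fun i => x i ∈ U₀)]
    have e1 : ∏ i ∈ Finset.univ.filter (fun i => x i ∈ U₀), om (x i) = (lam⁻¹) ^ (cU x) := by
      calc ∏ i ∈ Finset.univ.filter (fun i => x i ∈ U₀), om (x i)
          = ∏ i ∈ Finset.univ.filter (fun i => x i ∈ U₀), lam⁻¹ :=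
            Finset.prod_congr rfl (fun i hi => by
              rw [Finset.mem_filter] at hi
              simp [hom, hi.2])
        _ = (lam⁻¹) ^ (cU x) := by rw [Finset.prod_const, hcU]
    have e2 : ∏ i ∈ Finset.univ.filter (fun i => ¬ x i ∈ U₀), om (x i) = lam ^ (cW x) := by
      rw [← Finset.prod_filter_mul_prod_filter_not (Finset.univ.filter (fun i => ¬ x i ∈ U₀))
        (fun i => x i ∈ nbhd G U₀)]
      have e21 : (Finset.univ.filter (fun i => ¬ x i ∈ U₀)).filter (fun i => x i ∈ nbhd G U₀)
          = Finset.univ.filter (fun i => x i ∈ nbhd G U₀) := by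
        rw [Finset.filter_filter]
        apply Finset.filter_congr
        intro i _
        constructor
        · exact fun h => h.2
        · exact fun h => ⟨hdisjUW _ h, h⟩
      have e22 : ∏ i ∈ (Finset.univ.filter (fun i => ¬ x i ∈ U₀)).filter
          (fun i => x i ∈ nbhd G U₀), om (x i) = lam ^ (cW x) := by
        rw [e21]
        calc ∏ i ∈ Finset.univ.filter (fun i => x i ∈ nbhd G U₀), om (x i)
            = ∏ i ∈ Finset.univ.filter (fun i => x i ∈ nbhd G U₀), lam :=
              Finset.prod_congr rfl (fun i hi => by
                rw [Finset.mem_filter] at hi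
                simp [hom, hi.2, hdisjUW _ hi.2])
          _ = lam ^ (cW x) := by rw [Finset.prod_const, hcW]
      have e23 : ∏ i ∈ (Finset.univ.filter (fun i => ¬ x i ∈ U₀)).filter
          (fun i => ¬ x i ∈ nbhd G U₀), om (x i) = 1 := by
        apply Finset.prod_eq_one
        intro i hi
        rw [Finset.filter_filter, Finset.mem_filter] at hi
        simp [hom, hi.2.1, hi.2.2]
      rw [e22, e23, mul_one]
    rw [e1, e2]
    ring
  have hbadge : ∀ x ∈ Bad, (1:ℝ) ≤ ∏ i, om (x i) := by
    intro x hx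
    rw [hBad, Finset.mem_filter] at hx
    have hle : cU x ≤ cW x := by omega
    rw [prodform x, inv_pow, ← div_eq_mul_inv, le_div_iff₀ (pow_pos hlampos _), one_mul]
    exact pow_le_pow_right₀ hlam1.le hle
  have hsumom : ∑ v, om v = sigma := by
    rw [← Finset.sum_filter_add_sum_filter_not Finset.univ (fun v => v ∈ U₀)]
    have f1 : ∑ v ∈ Finset.univ.filter (fun v => v ∈ U₀), om v = (u:ℝ) * lam⁻¹ := by
      calc ∑ v ∈ Finset.univ.filter (fun v => v ∈ U₀), om v
          = ∑ v ∈ Finset.univ.filter (fun v => v ∈ U₀), lam⁻¹ :=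
            Finset.sum_congr rfl (fun v hv => by
              rw [Finset.mem_filter] at hv
              simp [hom, hv.2])
        _ = (u:ℝ) * lam⁻¹ := by
            have huniv : Finset.univ.filter (fun v => v ∈ U₀) = U₀ := by
              ext v
              simp
            rw [Finset.sum_const, nsmul_eq_mul, huniv, hu]
    have f2 : ∑ v ∈ Finset.univ.filter (fun v => ¬ v ∈ U₀), om v
        = (w:ℝ) * lam + ((n:ℝ) - ((u:ℝ) + (w:ℝ))) := by
      rw [← Finset.sum_filter_add_sum_filter_not (Finset.univ.filter (fun v => ¬ v ∈ U₀))
        (fun v => v ∈ nbhd G U₀)]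
      have g21 : (Finset.univ.filter (fun v => ¬ v ∈ U₀)).filter (fun v => v ∈ nbhd G U₀)
          = nbhd G U₀ := by
        rw [Finset.filter_filter]
        ext v
        simp only [Finset.mem_filter, Finset.mem_univ, true_and]
        constructor
        · exact fun h => h.2
        · exact fun h => ⟨hdisjUW _ h, h⟩
      have g1 : ∑ v ∈ (Finset.univ.filter (fun v => ¬ v ∈ U₀)).filter
          (fun v => v ∈ nbhd G U₀), om v = (w:ℝ) * lam := by
        rw [g21]
        calc ∑ v ∈ nbhd G U₀, om v = ∑ v ∈ nbhd G U₀, lam :=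
              Finset.sum_congr rfl (fun v hv => by simp [hom, hv, hdisjUW _ hv])
          _ = (w:ℝ) * lam := by rw [Finset.sum_const, nsmul_eq_mul, hw]
      have g2 : ∑ v ∈ (Finset.univ.filter (fun v => ¬ v ∈ U₀)).filter
          (fun v => ¬ v ∈ nbhd G U₀), om v = ((n:ℝ) - ((u:ℝ) + (w:ℝ))) := by
        have hset : (Finset.univ.filter (fun v => ¬ v ∈ U₀)).filter
            (fun v => ¬ v ∈ nbhd G U₀) = (U₀ ∪ nbhd G U₀)ᶜ := by
          rw [Finset.filter_filter]
          ext v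
          simp only [Finset.mem_filter, Finset.mem_univ, true_and, Finset.mem_compl,
            Finset.mem_union]
          tauto
        rw [hset]
        calc ∑ v ∈ (U₀ ∪ nbhd G U₀)ᶜ, om v
            = ∑ v ∈ (U₀ ∪ nbhd G U₀)ᶜ, 1 := Finset.sum_congr rfl (fun v hv => by
                rw [Finset.mem_compl, Finset.mem_union] at hv
                push_neg at hv
                simp [hom, hv.1, hv.2])
          _ = ((n:ℝ) - ((u:ℝ) + (w:ℝ))) := by
              rw [Finset.sum_const, nsmul_eq_mul, mul_one, Finset.card_compl,
                Finset.card_union_of_disjoint (indep_disjoint_nbhd hU₀)]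
              rw [Nat.cast_sub (by rw [hu, hw] at hmn; exact hmn)]
              push_cast
              rw [hn]
      rw [g1, g2]
    rw [f1, f2, hsigma]
    ring
  have hident : ∑ x : Fin t → α, ∏ i, om (x i) = (∑ v, om v) ^ t := by
    have h := Finset.prod_univ_sum (fun _ : Fin t => (Finset.univ : Finset α))
      (fun _ v => om v)
    rw [Finset.prod_const, Finset.card_univ, Fintype.card_fin, Fintype.piFinset_univ] at h
    exact h.symm
  have hbadcount : (Bad.card : ℝ) ≤ sigma ^ t := by
    calc (Bad.card:ℝ) = ∑ _x ∈ Bad, (1:ℝ) := by rw [Finset.sum_const, nsmul_eq_mul, mul_one]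
      _ ≤ ∑ x ∈ Bad, ∏ i, om (x i) := Finset.sum_le_sum hbadge
      _ ≤ ∑ x : Fin t → α, ∏ i, om (x i) :=
          Finset.sum_le_sum_of_subset_of_nonneg (Finset.subset_univ _)
            (fun x _ _ => Finset.prod_nonneg (fun i _ => hom0 _))
      _ = (∑ v, om v) ^ t := hident
      _ = sigma ^ t := by rw [hsumom]
  have hsplit : M.card + Bad.card = Fintype.card (Fin t → α) := by
    rw [hM, hBad, Finset.card_filter_add_card_filter_not, Finset.card_univ]
  have hMcard : (Fintype.card (Fin t → α) : ℝ) - sigma ^ t ≤ (M.card : ℝ) := by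
    have hc : (M.card:ℝ) + (Bad.card:ℝ) = (Fintype.card (Fin t → α):ℝ) := by
      exact_mod_cast hsplit
    linarith
  have halpha : (M.card : ℝ) ≤ (alphaNum (tensorPow G t) : ℝ) := by
    exact_mod_cast card_le_alphaNum hMind
  have hNt : (Fintype.card (Fin t → α) : ℝ) = (n:ℝ) ^ t := by
    rw [Fintype.card_fun, Fintype.card_fin, hn]
    push_cast
    ring
  have hNpos : (0:ℝ) < (Fintype.card (Fin t → α) : ℝ) := by
    exact_mod_cast Fintype.card_pos
  rw [iRatio, le_div_iff₀ hNpos]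
  have hexp : (1 - (sigma/(n:ℝ)) ^ t) * (Fintype.card (Fin t → α):ℝ)
      = (Fintype.card (Fin t → α):ℝ) - sigma ^ t := by
    rw [hNt, sub_mul, one_mul, div_pow, div_mul_cancel₀ _ (ne_of_gt (pow_pos hnpos t))]
  rw [hexp]
  linarith

end Lower2
lemma iRatio_le_one {β : Type*} [Fintype β] [Nonempty β] (H : SimpleGraph β) : iRatio H ≤ 1 := by
  rw [iRatio, div_le_one (by exact_mod_cast Fintype.card_pos : (0:ℝ) < (Fintype.card β : ℝ))]
  exact_mod_cast alphaNum_le_card H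

theorem stmt17 {α : Type*} [Fintype α] [Nonempty α] (G : SimpleGraph α) (L : ℝ)
    (h : Tendsto (fun k : ℕ => iRatio (tensorPow G (k + 1))) atTop (nhds L)) :
    ∃ q : ℚ, L = (q : ℝ) := by
  classical
  obtain ⟨U₀, hne, hU₀, hval⟩ := aRatio_mem G
  have hupos : (0:ℝ) < (U₀.card : ℝ) := by exact_mod_cast Finset.card_pos.mpr hne
  have hwnn : (0:ℝ) ≤ ((nbhd G U₀).card : ℝ) := by positivity
  have hd : (0:ℝ) < (U₀.card : ℝ) + ((nbhd G U₀).card : ℝ) := by linarith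
  by_cases hhalf : aRatio G ≤ 1/2
  · -- L = aRatio G, a rational number
    set r : ℝ := ((Fintype.card α - (U₀.card + (nbhd G U₀).card) : ℕ) : ℝ)
        / (Fintype.card α : ℝ) with hr
    have hnpos : (0:ℝ) < (Fintype.card α : ℝ) := by exact_mod_cast Fintype.card_pos
    have hr0 : 0 ≤ r := by rw [hr]; positivity
    have hr1 : r < 1 := by
      rw [hr, div_lt_one hnpos]
      have hlt : Fintype.card α - (U₀.card + (nbhd G U₀).card) < Fintype.card α := by
        have h1 : 0 < U₀.card + (nbhd G U₀).card := by
          have := Finset.card_pos.mpr hne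
          omega
        exact Nat.sub_lt Fintype.card_pos h1
      exact_mod_cast hlt
    have hlow : ∀ k, aRatio G * (1 - r ^ k) ≤ iRatio (tensorPow G (k + 1)) := by
      intro k
      rw [hval]
      exact iRatio_lower_rec G hne hU₀ k
    have hupp : ∀ k, iRatio (tensorPow G (k + 1)) ≤ aRatio G :=
      fun k => iRatio_le_aRatio_of_le_half G hhalf k
    have hpow : Tendsto (fun k : ℕ => r ^ k) atTop (nhds 0) :=
      tendsto_pow_atTop_nhds_zero_of_lt_one hr0 hr1
    have h1 : Tendsto (fun k : ℕ => aRatio G * (1 - r ^ k)) atTop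
        (nhds (aRatio G * (1 - 0))) := (tendsto_const_nhds.sub hpow).const_mul _
    rw [sub_zero, mul_one] at h1
    have h2 : Tendsto (fun k : ℕ => iRatio (tensorPow G (k + 1))) atTop (nhds (aRatio G)) :=
      tendsto_of_tendsto_of_tendsto_of_le_of_le h1 tendsto_const_nhds hlow hupp
    have hL : L = aRatio G := tendsto_nhds_unique h h2
    refine ⟨(U₀.card : ℚ) / ((U₀.card : ℚ) + ((nbhd G U₀).card : ℚ)), ?_⟩
    rw [hL, hval]
    push_cast
    ring
  · -- L = 1
    push_neg at hhalf
    have hwu : (nbhd G U₀).card < U₀.card := by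
      have hgt : (1:ℝ)/2 < (U₀.card : ℝ) / ((U₀.card : ℝ) + ((nbhd G U₀).card : ℝ)) := by
        rw [← hval]
        exact hhalf
      rw [lt_div_iff₀ hd] at hgt
      have : ((nbhd G U₀).card : ℝ) < (U₀.card : ℝ) := by linarith
      exact_mod_cast this
    obtain ⟨q0, hq0, hq1, hqk⟩ := iRatio_lower_maj G hU₀ hwu
    have hupp : ∀ k : ℕ, iRatio (tensorPow G (k + 1)) ≤ 1 := fun k => iRatio_le_one _
    have hpow : Tendsto (fun k : ℕ => q0 ^ (k + 1)) atTop (nhds 0) :=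
      (tendsto_pow_atTop_nhds_zero_of_lt_one hq0 hq1).comp (tendsto_add_atTop_nat 1)
    have h1 : Tendsto (fun k : ℕ => 1 - q0 ^ (k + 1)) atTop (nhds (1 - 0)) :=
      tendsto_const_nhds.sub hpow
    rw [sub_zero] at h1
    have h2 : Tendsto (fun k : ℕ => iRatio (tensorPow G (k + 1))) atTop (nhds 1) :=
      tendsto_of_tendsto_of_tendsto_of_le_of_le h1 tendsto_const_nhds hqk hupp
    have hL : L = 1 := tendsto_nhds_unique h h2
    exact ⟨1, by rw [hL]; norm_num⟩
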